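/- Every pluriconformal totally umbilic map φ : M → N from a Hermitian manifold to a Riemannian manifold is real isotropic: the condition ∇dφ(T^{10}M, T^{10}M) ⊆ dφ(T^{10}M), together with isotropy of dφ(T^{10}M), implies ⟨∇^{r−1}_{T^{10}M} dφ(T^{10}M), ∇^{s−1}_{T^{10}M} dφ(T^{10}M)⟩ = 0 for all r, s ≥ 1. -/

import Mathlib

/-- The element `i` of a `ℂ`-algebra of (complex-valued) functions. -/
noncomputable def cI (F : Type*) [CommRing F] [Algebra ℂ F] : F :=
  algebraMap ℂ F Complex.I

/-- The iterated covariant derivatives `∇^{r}_{T¹⁰M} dφ(T¹⁰M)`. -/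
noncomputable def iterDerivSet {F V S : Type*} [CommRing F] [Algebra ℂ F]
    [AddCommGroup V] [Module F V] [AddCommGroup S] [Module F S]
    (JM : V →ₗ[F] V) (dphi : V →ₗ[F] S) (nab : V → S → S) : ℕ → Set S
  | 0 => {s | ∃ v : V, JM v = cI F • v ∧ s = dphi v}
  | (r + 1) => {s | ∃ v : V, ∃ t ∈ iterDerivSet JM dphi nab r,
      JM v = cI F • v ∧ s = nab v t}

/-- The submodule of sections generated by `dφ(T¹⁰M)`. -/
noncomputable def dphiTenZeroSpan {F V S : Type*} [CommRing F] [Algebra ℂ F]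
    [AddCommGroup V] [Module F V] [AddCommGroup S] [Module F S]
    (JM : V →ₗ[F] V) (dphi : V →ₗ[F] S) : Submodule F S :=
  Submodule.span F {s | ∃ v : V, JM v = cI F • v ∧ s = dphi v}

/-- Every pluriconformal totally umbilic map `φ : M → N` from a Hermitian manifold to a
Riemannian manifold is real isotropic: the condition
`∇dφ(T¹⁰M, T¹⁰M) ⊆ dφ(T¹⁰M)` (total umbilicity, hypothesis `humb`, where
`∇dφ(v,w) = ∇_v(dφ w) - dφ(∇^M_v w)`), together with isotropy of `dφ(T¹⁰M)`
(pluriconformality, hypothesis `hpc`), implies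
`⟨∇^{r-1}_{T¹⁰M} dφ(T¹⁰M), ∇^{s-1}_{T¹⁰M} dφ(T¹⁰M)⟩ = 0` for all `r, s ≥ 1`.
Hermitian-ness of `M` enters through `∇^M_{T¹⁰M} T¹⁰M ⊆ T¹⁰M` (hypothesis `hMherm`). -/
theorem pluriconformal_totally_umbilic_implies_real_isotropic
    (F V S : Type*) [CommRing F] [Algebra ℂ F]
    [AddCommGroup V] [Module F V] [AddCommGroup S] [Module F S]
    (JM : V →ₗ[F] V) (hJM2 : ∀ v, JM (JM v) = -v)
    (nabM : V → V → V)
    (hMherm : ∀ v w : V, JM v = cI F • v → JM w = cI F • w →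
      JM (nabM v w) = cI F • nabM v w)
    (dphi : V →ₗ[F] S)
    (D : V → F → F) (nab : V → S → S)
    (hadd2 : ∀ (v : V) (s t : S), nab v (s + t) = nab v s + nab v t)
    (hleib : ∀ (v : V) (f : F) (s : S), nab v (f • s) = D v f • s + f • nab v s)
    (g : S →ₗ[F] S →ₗ[F] F)
    (hpc : ∀ v w : V, JM v = cI F • v → JM w = cI F • w → g (dphi v) (dphi w) = 0)
    (humb : ∀ v w : V, JM v = cI F • v → JM w = cI F • w →
      nab v (dphi w) - dphi (nabM v w) ∈ dphiTenZeroSpan JM dphi) :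
    ∀ (r s : ℕ) (x y : S), x ∈ iterDerivSet JM dphi nab r →
      y ∈ iterDerivSet JM dphi nab s → g x y = 0 := by
  intro r s x y hx hy
  -- Every iterDerivSet is contained in the span of dφ(T¹⁰M).
  have key : ∀ (r : ℕ) (x : S), x ∈ iterDerivSet JM dphi nab r →
      x ∈ dphiTenZeroSpan JM dphi := by
    intro r
    induction r with
    | zero =>
      intro x hx
      exact Submodule.subset_span hx
    | succ n ih =>
      rintro x ⟨v, t, ht, hv, rfl⟩
      have ht' : t ∈ dphiTenZeroSpan JM dphi := ih t ht
      have hnab0 : nab v 0 = 0 := by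
        have := hadd2 v 0 0
        rw [add_zero] at this
        exact left_eq_add.mp this
      -- show nab v maps the span into itself
      refine Submodule.span_induction
        (p := fun s _ => nab v s ∈ dphiTenZeroSpan JM dphi) ?_ ?_ ?_ ?_ ht'
      · rintro s ⟨w, hw, rfl⟩
        have h1 := humb v w hv hw
        have h2 : dphi (nabM v w) ∈ dphiTenZeroSpan JM dphi :=
          Submodule.subset_span ⟨nabM v w, hMherm v w hv hw, rfl⟩
        have := Submodule.add_mem _ h1 h2
        simpa using this
      · simp [hnab0]
      · intro a b _ _ ha hb
        rw [hadd2]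
        exact Submodule.add_mem _ ha hb
      · intro f a hamem ha
        rw [hleib]
        exact Submodule.add_mem _ (Submodule.smul_mem _ _ hamem) (Submodule.smul_mem _ _ ha)
  have hx' := key r x hx
  have hy' := key s y hy
  -- g vanishes on the span paired with itself
  refine Submodule.span_induction
    (p := fun a _ => g a y = 0) ?_ ?_ ?_ ?_ hx'
  · rintro a ⟨v, hv, rfl⟩
    refine Submodule.span_induction
      (p := fun b _ => g (dphi v) b = 0) ?_ ?_ ?_ ?_ hy'
    · rintro b ⟨w, hw, rfl⟩
      exact hpc v w hv hw
    · simp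
    · intro b c _ _ hb hc; simp [hb, hc]
    · intro f b _ hb; simp [hb]
  · simp
  · intro a b _ _ ha hb; simp [ha, hb]
  · intro f a _ ha; simp [ha]
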